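/- Let u(r,θ) be a C⁶ function on an annular region, let v, w be C⁴ bounded functions there, and define U²(r,θ) = u(r,θ) + Δr²·v(r,θ) + Δθ²·w(r,θ). Define the deferred-correction operator H⁴₅ acting on u at (r,θ) by: [u(r+Δr,θ) − 2u(r,θ) + u(r−Δr,θ)]/Δr² + (1/r)[u(r+Δr,θ) − u(r−Δr,θ)]/(2Δr) + (1/r²)[u(r,θ+Δθ) − 2u(r,θ) + u(r,θ−Δθ)]/Δθ² + k²u(r,θ) − (Δr²/12)(D⁴ᵣU² + (2/r)D³ᵣU²)(r,θ) − (Δθ²/(12r²))(D⁴θU²)(r,θ), where D⁴ᵣ, D³ᵣ, D⁴θ are the centered second-order stencils for the fourth radial, third radial, and fourth angular derivatives with steps Δr and Δθ. Then H⁴₅u(r,θ) = u_rr + (1/r)u_r + (1/r²)u_θθ + k²u + O(Δr⁴) + O(Δθ⁴) + O(Δr²Δθ²). -/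

import Mathlib

open Real Finset

lemma taylor_aux : ∀ (n : ℕ) (f : ℝ → ℝ), ContDiff ℝ n f → ∀ (a R M : ℝ),
    (∀ x ∈ Set.Icc (a - R) (a + R), |iteratedDeriv n f x| ≤ M) →
    ∀ h : ℝ, |h| ≤ R →
    |f (a + h) - ∑ i ∈ range n, iteratedDeriv i f a * h ^ i / (Nat.factorial i)|
      ≤ M * |h| ^ n := by
  intro n
  induction n with
  | zero =>
    intro f hf a R M hM h hh
    obtain ⟨h1, h2⟩ := abs_le.1 hh
    simpa using hM (a + h) ⟨by linarith, by linarith⟩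
  | succ n ih =>
    intro f hf a R M hM h hh
    obtain ⟨hh1, hh2⟩ := abs_le.1 hh
    have hR : 0 ≤ R := le_trans (abs_nonneg h) hh
    have hM0 : 0 ≤ M := le_trans (abs_nonneg _) (hM a ⟨by linarith, by linarith⟩)
    have hf' : ContDiff ℝ n (deriv f) := by
      rw [show ((n + 1 : ℕ) : WithTop ℕ∞) = (n : WithTop ℕ∞) + 1 by push_cast; ring] at hf
      exact (contDiff_succ_iff_deriv.1 hf).2.2
    have hdf : Differentiable ℝ f := by
      rw [show ((n + 1 : ℕ) : WithTop ℕ∞) = (n : WithTop ℕ∞) + 1 by push_cast; ring] at hf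
      exact (contDiff_succ_iff_deriv.1 hf).1
    have hIH := ih (deriv f) hf' a R M (by
      intro x hx
      rw [← iteratedDeriv_succ']
      exact hM x hx)
    set c : ℕ → ℝ := fun i => iteratedDeriv i f a with hc
    set P : ℝ → ℝ := fun t => f (a + t) - ∑ i ∈ range (n + 1), c i * t ^ i / (Nat.factorial i)
      with hP
    have hPd : ∀ t : ℝ, HasDerivAt P
        (deriv f (a + t) - ∑ i ∈ range n, c (i + 1) * t ^ i / (Nat.factorial i)) t := by
      intro t
      have h1 : HasDerivAt (fun t : ℝ => f (a + t)) (deriv f (a + t)) t := by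
        have := ((hdf (a + t)).hasDerivAt).comp t ((hasDerivAt_id t).const_add a)
        simpa [Function.comp_def] using this
      have h2 : HasDerivAt (fun t : ℝ => ∑ i ∈ range (n + 1), c i * t ^ i / (Nat.factorial i))
          (∑ i ∈ range (n + 1), c i * ((i : ℝ) * t ^ (i - 1)) / (Nat.factorial i)) t := by
        apply HasDerivAt.fun_sum
        intro i _
        exact ((hasDerivAt_pow i t).const_mul (c i)).div_const _
      have h3 : (∑ i ∈ range (n + 1), c i * ((i : ℝ) * t ^ (i - 1)) / (Nat.factorial i))
          = ∑ i ∈ range n, c (i + 1) * t ^ i / (Nat.factorial i) := by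
        rw [Finset.sum_range_succ']
        simp only [Nat.cast_zero, zero_mul, mul_zero, zero_div, add_zero]
        apply Finset.sum_congr rfl
        intro i _
        rw [Nat.factorial_succ]
        have : ((i : ℝ) + 1) ≠ 0 := by positivity
        push_cast
        field_simp
      rw [← h3]
      exact h1.sub h2
    have hP0 : P 0 = 0 := by
      simp only [hP]
      rw [Finset.sum_range_succ']
      simp [hc]
    have key := Convex.norm_image_sub_le_of_norm_hasDerivWithin_le
      (f := P) (f' := fun t => deriv f (a + t) - ∑ i ∈ range n, c (i + 1) * t ^ i / (Nat.factorial i))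
      (C := M * |h| ^ n) (s := Set.uIcc 0 h)
      (fun t _ => (hPd t).hasDerivWithinAt)
      (by
        intro t ht
        have htabs : |t| ≤ |h| := by
          rcases Set.mem_uIcc.mp ht with ⟨a1, a2⟩ | ⟨a1, a2⟩
          · rw [abs_of_nonneg a1]; exact le_trans a2 (le_abs_self h)
          · rw [abs_of_nonpos a2]; exact le_trans (by linarith) (neg_le_abs h)
        have htR : |t| ≤ R := le_trans htabs hh
        have hb := hIH t htR
        have heq : (∑ i ∈ range n, iteratedDeriv i (deriv f) a * t ^ i / (Nat.factorial i))
            = ∑ i ∈ range n, c (i + 1) * t ^ i / (Nat.factorial i) := by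
          apply Finset.sum_congr rfl
          intro i _
          rw [hc, ← iteratedDeriv_succ']
        rw [heq] at hb
        calc ‖deriv f (a + t) - ∑ i ∈ range n, c (i + 1) * t ^ i / (Nat.factorial i)‖
            ≤ M * |t| ^ n := hb
          _ ≤ M * |h| ^ n := by
              apply mul_le_mul_of_nonneg_left _ hM0
              exact pow_le_pow_left₀ (abs_nonneg t) htabs n)
      (convex_uIcc 0 h) (Set.left_mem_uIcc) (Set.right_mem_uIcc)
    rw [hP0, sub_zero] at key
    calc |P h| ≤ M * |h| ^ n * ‖h - 0‖ := key
      _ = M * |h| ^ (n + 1) := by rw [sub_zero]; rw [Real.norm_eq_abs]; ring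

lemma slice_bound (n : ℕ) (φ : ℝ → ℝ) (hφ : ContDiff ℝ n φ) (a : ℝ) :
    ∃ M : ℝ, 0 ≤ M ∧ ∀ h : ℝ, |h| ≤ 2 →
      |φ (a + h) - ∑ i ∈ range n, iteratedDeriv i φ a * h ^ i / (Nat.factorial i)|
        ≤ M * |h| ^ n := by
  obtain ⟨M, hM⟩ := (isCompact_Icc (a := a - 2) (b := a + 2)).exists_bound_of_continuousOn
    ((hφ.continuous_iteratedDeriv n le_rfl).continuousOn)
  refine ⟨max M 0, le_max_right _ _, fun h hh => taylor_aux n φ hφ a 2 (max M 0) ?_ h hh⟩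
  intro x hx
  exact le_trans (by simpa using hM x hx) (le_max_left _ _)

lemma taylor6_slice (φ : ℝ → ℝ) (hφ : ContDiff ℝ 6 φ) (a : ℝ) :
    ∃ M : ℝ, 0 ≤ M ∧ ∀ h : ℝ, |h| ≤ 2 →
      |φ (a + h) - (φ a + deriv φ a * h + iteratedDeriv 2 φ a / 2 * h ^ 2
        + iteratedDeriv 3 φ a / 6 * h ^ 3 + iteratedDeriv 4 φ a / 24 * h ^ 4
        + iteratedDeriv 5 φ a / 120 * h ^ 5)| ≤ M * |h| ^ 6 := by
  obtain ⟨M, hM0, hM⟩ := slice_bound 6 φ hφ a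
  refine ⟨M, hM0, fun h hh => ?_⟩
  have e : (∑ i ∈ range 6, iteratedDeriv i φ a * h ^ i / (Nat.factorial i))
      = φ a + deriv φ a * h + iteratedDeriv 2 φ a / 2 * h ^ 2
        + iteratedDeriv 3 φ a / 6 * h ^ 3 + iteratedDeriv 4 φ a / 24 * h ^ 4
        + iteratedDeriv 5 φ a / 120 * h ^ 5 := by
    simp [Finset.sum_range_succ, Nat.factorial, iteratedDeriv_one, iteratedDeriv_zero]
    ring
  rw [← e]
  exact hM h hh

lemma taylor4_slice (φ : ℝ → ℝ) (hφ : ContDiff ℝ 4 φ) (a : ℝ) :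
    ∃ M : ℝ, 0 ≤ M ∧ ∀ h : ℝ, |h| ≤ 2 →
      |φ (a + h) - (φ a + deriv φ a * h + iteratedDeriv 2 φ a / 2 * h ^ 2
        + iteratedDeriv 3 φ a / 6 * h ^ 3)| ≤ M * |h| ^ 4 := by
  obtain ⟨M, hM0, hM⟩ := slice_bound 4 φ hφ a
  refine ⟨M, hM0, fun h hh => ?_⟩
  have e : (∑ i ∈ range 4, iteratedDeriv i φ a * h ^ i / (Nat.factorial i))
      = φ a + deriv φ a * h + iteratedDeriv 2 φ a / 2 * h ^ 2
        + iteratedDeriv 3 φ a / 6 * h ^ 3 := by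
    simp [Finset.sum_range_succ, Nat.factorial, iteratedDeriv_one, iteratedDeriv_zero]
    ring
  rw [← e]
  exact hM h hh

lemma abs_div_le' {x d K : ℝ} (hd : 0 < d) (h : |x| ≤ K * d) : |x / d| ≤ K := by
  rw [abs_div, abs_of_pos hd, div_le_iff₀ hd]; exact h

set_option maxHeartbeats 4000000 in
theorem stmt_6 (u v w : ℝ × ℝ → ℝ) (r θ k : ℝ) (hr : 0 < r)
    (hu : ContDiff ℝ 6 u) (hv : ContDiff ℝ 4 v) (hw : ContDiff ℝ 4 w)
    (hvb : ∃ M : ℝ, ∀ p, |v p| ≤ M) (hwb : ∃ M : ℝ, ∀ p, |w p| ≤ M) :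
    ∃ C δ : ℝ, 0 < δ ∧ ∀ Δr Δθ : ℝ, 0 < Δr → Δr < δ → 0 < Δθ → Δθ < δ →
      let U : ℝ × ℝ → ℝ := fun p => u p + Δr ^ 2 * v p + Δθ ^ 2 * w p
      let D4r : ℝ := (U (r - 2*Δr, θ) - 4 * U (r - Δr, θ) + 6 * U (r, θ)
        - 4 * U (r + Δr, θ) + U (r + 2*Δr, θ)) / Δr ^ 4
      let D3r : ℝ := (-(1/2) * U (r - 2*Δr, θ) + U (r - Δr, θ)
        - U (r + Δr, θ) + (1/2) * U (r + 2*Δr, θ)) / Δr ^ 3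
      let D4θ : ℝ := (U (r, θ - 2*Δθ) - 4 * U (r, θ - Δθ) + 6 * U (r, θ)
        - 4 * U (r, θ + Δθ) + U (r, θ + 2*Δθ)) / Δθ ^ 4
      |((u (r + Δr, θ) - 2 * u (r, θ) + u (r - Δr, θ)) / Δr ^ 2
          + (1 / r) * (u (r + Δr, θ) - u (r - Δr, θ)) / (2 * Δr)
          + (1 / r ^ 2) * (u (r, θ + Δθ) - 2 * u (r, θ) + u (r, θ - Δθ)) / Δθ ^ 2
          + k ^ 2 * u (r, θ)
          - (Δr ^ 2 / 12) * (D4r + (2 / r) * D3r)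
          - (Δθ ^ 2 / (12 * r ^ 2)) * D4θ)
        - (iteratedDeriv 2 (fun s => u (s, θ)) r
          + (1 / r) * deriv (fun s => u (s, θ)) r
          + (1 / r ^ 2) * iteratedDeriv 2 (fun t => u (r, t)) θ
          + k ^ 2 * u (r, θ))|
      ≤ C * (Δr ^ 4 + Δθ ^ 4 + Δr ^ 2 * Δθ ^ 2) := by
  have hr0 : r ≠ 0 := ne_of_gt hr
  obtain ⟨Mf, hMf0, hTf⟩ := taylor6_slice (fun s => u (s, θ)) (hu.comp (contDiff_id.prodMk contDiff_const)) r
  obtain ⟨Mg, hMg0, hTg⟩ := taylor6_slice (fun t => u (r, t)) (hu.comp (contDiff_const.prodMk contDiff_id)) θ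
  obtain ⟨Mp, hMp0, hTp⟩ := taylor4_slice (fun s => v (s, θ)) (hv.comp (contDiff_id.prodMk contDiff_const)) r
  obtain ⟨Mq, hMq0, hTq⟩ := taylor4_slice (fun s => w (s, θ)) (hw.comp (contDiff_id.prodMk contDiff_const)) r
  obtain ⟨Ms, hMs0, hTs⟩ := taylor4_slice (fun t => v (r, t)) (hv.comp (contDiff_const.prodMk contDiff_id)) θ
  obtain ⟨Mm, hMm0, hTm⟩ := taylor4_slice (fun t => w (r, t)) (hw.comp (contDiff_const.prodMk contDiff_id)) θ
  refine ⟨2*Mf + Mf/r + 2*Mg/r^2 + |iteratedDeriv 5 (fun s => u (s, θ)) r|/(30*r)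
    + (34/3)*Mf + (10/3)*Mp + (10/3)*Mq + 11*Mf/r
    + |iteratedDeriv 3 (fun s => v (s, θ)) r|/(6*r) + 3*Mp/r
    + |iteratedDeriv 3 (fun s => w (s, θ)) r|/(6*r) + 3*Mq/r
    + (34/3)*Mg/r^2 + (10/3)*Ms/r^2 + (10/3)*Mm/r^2, 1, one_pos, ?_⟩
  intro Δr Δθ hdr hdr1 hdt hdt1
  intro U D4r D3r D4θ
  have hdr0 : Δr ≠ 0 := ne_of_gt hdr
  have hdt0 : Δθ ≠ 0 := ne_of_gt hdt
  have hUe : U = fun p => u p + Δr ^ 2 * v p + Δθ ^ 2 * w p := rfl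
  have hD4re : D4r = (U (r - 2*Δr, θ) - 4 * U (r - Δr, θ) + 6 * U (r, θ)
        - 4 * U (r + Δr, θ) + U (r + 2*Δr, θ)) / Δr ^ 4 := rfl
  have hD3re : D3r = (-(1/2) * U (r - 2*Δr, θ) + U (r - Δr, θ)
        - U (r + Δr, θ) + (1/2) * U (r + 2*Δr, θ)) / Δr ^ 3 := rfl
  have hD4θe : D4θ = (U (r, θ - 2*Δθ) - 4 * U (r, θ - Δθ) + 6 * U (r, θ)
        - 4 * U (r, θ + Δθ) + U (r, θ + 2*Δθ)) / Δθ ^ 4 := rfl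
  simp only [hD4re, hD3re, hD4θe, hUe]
  have hA1 := hTf Δr (by rw [abs_of_pos hdr]; linarith)
  rw [abs_of_pos hdr] at hA1
  have hA2 := hTf (-Δr) (by rw [abs_neg, abs_of_pos hdr]; linarith)
  rw [show r + -Δr = r - Δr by ring, abs_neg, abs_of_pos hdr] at hA2
  have hA3 := hTf (2*Δr) (by rw [abs_of_pos (by positivity)]; linarith)
  rw [abs_of_pos (show (0:ℝ) < 2*Δr by positivity)] at hA3
  have hA4 := hTf (-(2*Δr)) (by rw [abs_neg, abs_of_pos (by positivity)]; linarith)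
  rw [show r + -(2*Δr) = r - 2*Δr by ring, abs_neg, abs_of_pos (show (0:ℝ) < 2*Δr by positivity)] at hA4
  have hBB1 := hTg Δθ (by rw [abs_of_pos hdt]; linarith)
  rw [abs_of_pos hdt] at hBB1
  have hBB2 := hTg (-Δθ) (by rw [abs_neg, abs_of_pos hdt]; linarith)
  rw [show θ + -Δθ = θ - Δθ by ring, abs_neg, abs_of_pos hdt] at hBB2
  have hBB3 := hTg (2*Δθ) (by rw [abs_of_pos (by positivity)]; linarith)
  rw [abs_of_pos (show (0:ℝ) < 2*Δθ by positivity)] at hBB3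
  have hBB4 := hTg (-(2*Δθ)) (by rw [abs_neg, abs_of_pos (by positivity)]; linarith)
  rw [show θ + -(2*Δθ) = θ - 2*Δθ by ring, abs_neg, abs_of_pos (show (0:ℝ) < 2*Δθ by positivity)] at hBB4
  have hPP1 := hTp Δr (by rw [abs_of_pos hdr]; linarith)
  rw [abs_of_pos hdr] at hPP1
  have hPP2 := hTp (-Δr) (by rw [abs_neg, abs_of_pos hdr]; linarith)
  rw [show r + -Δr = r - Δr by ring, abs_neg, abs_of_pos hdr] at hPP2
  have hPP3 := hTp (2*Δr) (by rw [abs_of_pos (by positivity)]; linarith)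
  rw [abs_of_pos (show (0:ℝ) < 2*Δr by positivity)] at hPP3
  have hPP4 := hTp (-(2*Δr)) (by rw [abs_neg, abs_of_pos (by positivity)]; linarith)
  rw [show r + -(2*Δr) = r - 2*Δr by ring, abs_neg, abs_of_pos (show (0:ℝ) < 2*Δr by positivity)] at hPP4
  have hQQ1 := hTq Δr (by rw [abs_of_pos hdr]; linarith)
  rw [abs_of_pos hdr] at hQQ1
  have hQQ2 := hTq (-Δr) (by rw [abs_neg, abs_of_pos hdr]; linarith)
  rw [show r + -Δr = r - Δr by ring, abs_neg, abs_of_pos hdr] at hQQ2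
  have hQQ3 := hTq (2*Δr) (by rw [abs_of_pos (by positivity)]; linarith)
  rw [abs_of_pos (show (0:ℝ) < 2*Δr by positivity)] at hQQ3
  have hQQ4 := hTq (-(2*Δr)) (by rw [abs_neg, abs_of_pos (by positivity)]; linarith)
  rw [show r + -(2*Δr) = r - 2*Δr by ring, abs_neg, abs_of_pos (show (0:ℝ) < 2*Δr by positivity)] at hQQ4
  have hSS1 := hTs Δθ (by rw [abs_of_pos hdt]; linarith)
  rw [abs_of_pos hdt] at hSS1
  have hSS2 := hTs (-Δθ) (by rw [abs_neg, abs_of_pos hdt]; linarith)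
  rw [show θ + -Δθ = θ - Δθ by ring, abs_neg, abs_of_pos hdt] at hSS2
  have hSS3 := hTs (2*Δθ) (by rw [abs_of_pos (by positivity)]; linarith)
  rw [abs_of_pos (show (0:ℝ) < 2*Δθ by positivity)] at hSS3
  have hSS4 := hTs (-(2*Δθ)) (by rw [abs_neg, abs_of_pos (by positivity)]; linarith)
  rw [show θ + -(2*Δθ) = θ - 2*Δθ by ring, abs_neg, abs_of_pos (show (0:ℝ) < 2*Δθ by positivity)] at hSS4
  have hMM1 := hTm Δθ (by rw [abs_of_pos hdt]; linarith)
  rw [abs_of_pos hdt] at hMM1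
  have hMM2 := hTm (-Δθ) (by rw [abs_neg, abs_of_pos hdt]; linarith)
  rw [show θ + -Δθ = θ - Δθ by ring, abs_neg, abs_of_pos hdt] at hMM2
  have hMM3 := hTm (2*Δθ) (by rw [abs_of_pos (by positivity)]; linarith)
  rw [abs_of_pos (show (0:ℝ) < 2*Δθ by positivity)] at hMM3
  have hMM4 := hTm (-(2*Δθ)) (by rw [abs_neg, abs_of_pos (by positivity)]; linarith)
  rw [show θ + -(2*Δθ) = θ - 2*Δθ by ring, abs_neg, abs_of_pos (show (0:ℝ) < 2*Δθ by positivity)] at hMM4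
  set c0 := u (r, θ) with h_c0
  set c1 := deriv (fun s => u (s, θ)) r with h_c1
  set c2 := iteratedDeriv 2 (fun s => u (s, θ)) r with h_c2
  set c3 := iteratedDeriv 3 (fun s => u (s, θ)) r with h_c3
  set c4 := iteratedDeriv 4 (fun s => u (s, θ)) r with h_c4
  set c5 := iteratedDeriv 5 (fun s => u (s, θ)) r with h_c5
  set d1 := deriv (fun t => u (r, t)) θ with h_d1
  set d2 := iteratedDeriv 2 (fun t => u (r, t)) θ with h_d2
  set d3 := iteratedDeriv 3 (fun t => u (r, t)) θ with h_d3
  set d4 := iteratedDeriv 4 (fun t => u (r, t)) θ with h_d4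
  set d5 := iteratedDeriv 5 (fun t => u (r, t)) θ with h_d5
  set va0 := v (r, θ) with h_va0
  set va1 := deriv (fun s => v (s, θ)) r with h_va1
  set va2 := iteratedDeriv 2 (fun s => v (s, θ)) r with h_va2
  set va3 := iteratedDeriv 3 (fun s => v (s, θ)) r with h_va3
  set vb1 := deriv (fun t => v (r, t)) θ with h_vb1
  set vb2 := iteratedDeriv 2 (fun t => v (r, t)) θ with h_vb2
  set vb3 := iteratedDeriv 3 (fun t => v (r, t)) θ with h_vb3
  set wa0 := w (r, θ) with h_wa0
  set wa1 := deriv (fun s => w (s, θ)) r with h_wa1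
  set wa2 := iteratedDeriv 2 (fun s => w (s, θ)) r with h_wa2
  set wa3 := iteratedDeriv 3 (fun s => w (s, θ)) r with h_wa3
  set wb1 := deriv (fun t => w (r, t)) θ with h_wb1
  set wb2 := iteratedDeriv 2 (fun t => w (r, t)) θ with h_wb2
  set wb3 := iteratedDeriv 3 (fun t => w (r, t)) θ with h_wb3
  set a1 := u (r + Δr, θ) - (c0 + c1 * Δr + c2 / 2 * Δr ^ 2 + c3 / 6 * Δr ^ 3 + c4 / 24 * Δr ^ 4 + c5 / 120 * Δr ^ 5) with h_a1
  set a2 := u (r - Δr, θ) - (c0 + c1 * (-Δr) + c2 / 2 * (-Δr) ^ 2 + c3 / 6 * (-Δr) ^ 3 + c4 / 24 * (-Δr) ^ 4 + c5 / 120 * (-Δr) ^ 5) with h_a2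
  set a3 := u (r + 2*Δr, θ) - (c0 + c1 * (2*Δr) + c2 / 2 * (2*Δr) ^ 2 + c3 / 6 * (2*Δr) ^ 3 + c4 / 24 * (2*Δr) ^ 4 + c5 / 120 * (2*Δr) ^ 5) with h_a3
  set a4 := u (r - 2*Δr, θ) - (c0 + c1 * (-(2*Δr)) + c2 / 2 * (-(2*Δr)) ^ 2 + c3 / 6 * (-(2*Δr)) ^ 3 + c4 / 24 * (-(2*Δr)) ^ 4 + c5 / 120 * (-(2*Δr)) ^ 5) with h_a4
  set b1 := u (r, θ + Δθ) - (c0 + d1 * Δθ + d2 / 2 * Δθ ^ 2 + d3 / 6 * Δθ ^ 3 + d4 / 24 * Δθ ^ 4 + d5 / 120 * Δθ ^ 5) with h_b1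
  set b2 := u (r, θ - Δθ) - (c0 + d1 * (-Δθ) + d2 / 2 * (-Δθ) ^ 2 + d3 / 6 * (-Δθ) ^ 3 + d4 / 24 * (-Δθ) ^ 4 + d5 / 120 * (-Δθ) ^ 5) with h_b2
  set b3 := u (r, θ + 2*Δθ) - (c0 + d1 * (2*Δθ) + d2 / 2 * (2*Δθ) ^ 2 + d3 / 6 * (2*Δθ) ^ 3 + d4 / 24 * (2*Δθ) ^ 4 + d5 / 120 * (2*Δθ) ^ 5) with h_b3
  set b4 := u (r, θ - 2*Δθ) - (c0 + d1 * (-(2*Δθ)) + d2 / 2 * (-(2*Δθ)) ^ 2 + d3 / 6 * (-(2*Δθ)) ^ 3 + d4 / 24 * (-(2*Δθ)) ^ 4 + d5 / 120 * (-(2*Δθ)) ^ 5) with h_b4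
  set p1 := v (r + Δr, θ) - (va0 + va1 * Δr + va2 / 2 * Δr ^ 2 + va3 / 6 * Δr ^ 3) with h_p1
  set p2 := v (r - Δr, θ) - (va0 + va1 * (-Δr) + va2 / 2 * (-Δr) ^ 2 + va3 / 6 * (-Δr) ^ 3) with h_p2
  set p3 := v (r + 2*Δr, θ) - (va0 + va1 * (2*Δr) + va2 / 2 * (2*Δr) ^ 2 + va3 / 6 * (2*Δr) ^ 3) with h_p3
  set p4 := v (r - 2*Δr, θ) - (va0 + va1 * (-(2*Δr)) + va2 / 2 * (-(2*Δr)) ^ 2 + va3 / 6 * (-(2*Δr)) ^ 3) with h_p4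
  set q1 := w (r + Δr, θ) - (wa0 + wa1 * Δr + wa2 / 2 * Δr ^ 2 + wa3 / 6 * Δr ^ 3) with h_q1
  set q2 := w (r - Δr, θ) - (wa0 + wa1 * (-Δr) + wa2 / 2 * (-Δr) ^ 2 + wa3 / 6 * (-Δr) ^ 3) with h_q2
  set q3 := w (r + 2*Δr, θ) - (wa0 + wa1 * (2*Δr) + wa2 / 2 * (2*Δr) ^ 2 + wa3 / 6 * (2*Δr) ^ 3) with h_q3
  set q4 := w (r - 2*Δr, θ) - (wa0 + wa1 * (-(2*Δr)) + wa2 / 2 * (-(2*Δr)) ^ 2 + wa3 / 6 * (-(2*Δr)) ^ 3) with h_q4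
  set s1 := v (r, θ + Δθ) - (va0 + vb1 * Δθ + vb2 / 2 * Δθ ^ 2 + vb3 / 6 * Δθ ^ 3) with h_s1
  set s2 := v (r, θ - Δθ) - (va0 + vb1 * (-Δθ) + vb2 / 2 * (-Δθ) ^ 2 + vb3 / 6 * (-Δθ) ^ 3) with h_s2
  set s3 := v (r, θ + 2*Δθ) - (va0 + vb1 * (2*Δθ) + vb2 / 2 * (2*Δθ) ^ 2 + vb3 / 6 * (2*Δθ) ^ 3) with h_s3
  set s4 := v (r, θ - 2*Δθ) - (va0 + vb1 * (-(2*Δθ)) + vb2 / 2 * (-(2*Δθ)) ^ 2 + vb3 / 6 * (-(2*Δθ)) ^ 3) with h_s4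
  set m1 := w (r, θ + Δθ) - (wa0 + wb1 * Δθ + wb2 / 2 * Δθ ^ 2 + wb3 / 6 * Δθ ^ 3) with h_m1
  set m2 := w (r, θ - Δθ) - (wa0 + wb1 * (-Δθ) + wb2 / 2 * (-Δθ) ^ 2 + wb3 / 6 * (-Δθ) ^ 3) with h_m2
  set m3 := w (r, θ + 2*Δθ) - (wa0 + wb1 * (2*Δθ) + wb2 / 2 * (2*Δθ) ^ 2 + wb3 / 6 * (2*Δθ) ^ 3) with h_m3
  set m4 := w (r, θ - 2*Δθ) - (wa0 + wb1 * (-(2*Δθ)) + wb2 / 2 * (-(2*Δθ)) ^ 2 + wb3 / 6 * (-(2*Δθ)) ^ 3) with h_m4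
  clear_value c0 c1 c2 c3 c4 c5 d1 d2 d3 d4 d5 va0 va1 va2 va3 vb1 vb2 vb3 wa0 wa1 wa2 wa3 wb1 wb2 wb3 a1 a2 a3 a4 b1 b2 b3 b4 p1 p2 p3 p4 q1 q2 q3 q4 s1 s2 s3 s4 m1 m2 m3 m4
  have hb_a1 : |a1| ≤ Mf*Δr^6 := hA1
  have hb_a2 : |a2| ≤ Mf*Δr^6 := hA2
  have hb_a3 : |a3| ≤ 64*Mf*Δr^6 := by rw [show (64:ℝ)*Mf*Δr^6 = Mf*(2*Δr)^6 by ring]; exact hA3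
  have hb_a4 : |a4| ≤ 64*Mf*Δr^6 := by rw [show (64:ℝ)*Mf*Δr^6 = Mf*(2*Δr)^6 by ring]; exact hA4
  obtain ⟨hl_a1, hu_a1⟩ := abs_le.mp hb_a1
  obtain ⟨hl_a2, hu_a2⟩ := abs_le.mp hb_a2
  obtain ⟨hl_a3, hu_a3⟩ := abs_le.mp hb_a3
  obtain ⟨hl_a4, hu_a4⟩ := abs_le.mp hb_a4
  have hb_b1 : |b1| ≤ Mg*Δθ^6 := hBB1
  have hb_b2 : |b2| ≤ Mg*Δθ^6 := hBB2
  have hb_b3 : |b3| ≤ 64*Mg*Δθ^6 := by rw [show (64:ℝ)*Mg*Δθ^6 = Mg*(2*Δθ)^6 by ring]; exact hBB3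
  have hb_b4 : |b4| ≤ 64*Mg*Δθ^6 := by rw [show (64:ℝ)*Mg*Δθ^6 = Mg*(2*Δθ)^6 by ring]; exact hBB4
  obtain ⟨hl_b1, hu_b1⟩ := abs_le.mp hb_b1
  obtain ⟨hl_b2, hu_b2⟩ := abs_le.mp hb_b2
  obtain ⟨hl_b3, hu_b3⟩ := abs_le.mp hb_b3
  obtain ⟨hl_b4, hu_b4⟩ := abs_le.mp hb_b4
  have hb_p1 : |p1| ≤ Mp*Δr^4 := hPP1
  have hb_p2 : |p2| ≤ Mp*Δr^4 := hPP2
  have hb_p3 : |p3| ≤ 16*Mp*Δr^4 := by rw [show (16:ℝ)*Mp*Δr^4 = Mp*(2*Δr)^4 by ring]; exact hPP3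
  have hb_p4 : |p4| ≤ 16*Mp*Δr^4 := by rw [show (16:ℝ)*Mp*Δr^4 = Mp*(2*Δr)^4 by ring]; exact hPP4
  obtain ⟨hl_p1, hu_p1⟩ := abs_le.mp hb_p1
  obtain ⟨hl_p2, hu_p2⟩ := abs_le.mp hb_p2
  obtain ⟨hl_p3, hu_p3⟩ := abs_le.mp hb_p3
  obtain ⟨hl_p4, hu_p4⟩ := abs_le.mp hb_p4
  have hb_q1 : |q1| ≤ Mq*Δr^4 := hQQ1
  have hb_q2 : |q2| ≤ Mq*Δr^4 := hQQ2
  have hb_q3 : |q3| ≤ 16*Mq*Δr^4 := by rw [show (16:ℝ)*Mq*Δr^4 = Mq*(2*Δr)^4 by ring]; exact hQQ3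
  have hb_q4 : |q4| ≤ 16*Mq*Δr^4 := by rw [show (16:ℝ)*Mq*Δr^4 = Mq*(2*Δr)^4 by ring]; exact hQQ4
  obtain ⟨hl_q1, hu_q1⟩ := abs_le.mp hb_q1
  obtain ⟨hl_q2, hu_q2⟩ := abs_le.mp hb_q2
  obtain ⟨hl_q3, hu_q3⟩ := abs_le.mp hb_q3
  obtain ⟨hl_q4, hu_q4⟩ := abs_le.mp hb_q4
  have hb_s1 : |s1| ≤ Ms*Δθ^4 := hSS1
  have hb_s2 : |s2| ≤ Ms*Δθ^4 := hSS2
  have hb_s3 : |s3| ≤ 16*Ms*Δθ^4 := by rw [show (16:ℝ)*Ms*Δθ^4 = Ms*(2*Δθ)^4 by ring]; exact hSS3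
  have hb_s4 : |s4| ≤ 16*Ms*Δθ^4 := by rw [show (16:ℝ)*Ms*Δθ^4 = Ms*(2*Δθ)^4 by ring]; exact hSS4
  obtain ⟨hl_s1, hu_s1⟩ := abs_le.mp hb_s1
  obtain ⟨hl_s2, hu_s2⟩ := abs_le.mp hb_s2
  obtain ⟨hl_s3, hu_s3⟩ := abs_le.mp hb_s3
  obtain ⟨hl_s4, hu_s4⟩ := abs_le.mp hb_s4
  have hb_m1 : |m1| ≤ Mm*Δθ^4 := hMM1
  have hb_m2 : |m2| ≤ Mm*Δθ^4 := hMM2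
  have hb_m3 : |m3| ≤ 16*Mm*Δθ^4 := by rw [show (16:ℝ)*Mm*Δθ^4 = Mm*(2*Δθ)^4 by ring]; exact hMM3
  have hb_m4 : |m4| ≤ 16*Mm*Δθ^4 := by rw [show (16:ℝ)*Mm*Δθ^4 = Mm*(2*Δθ)^4 by ring]; exact hMM4
  obtain ⟨hl_m1, hu_m1⟩ := abs_le.mp hb_m1
  obtain ⟨hl_m2, hu_m2⟩ := abs_le.mp hb_m2
  obtain ⟨hl_m3, hu_m3⟩ := abs_le.mp hb_m3
  obtain ⟨hl_m4, hu_m4⟩ := abs_le.mp hb_m4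
  set S := Δr ^ 4 + Δθ ^ 4 + Δr ^ 2 * Δθ ^ 2 with hSdef
  clear_value S
  have hS1 : Δr^4 ≤ S := by rw [hSdef]; linarith only [pow_pos hdt 4, mul_pos (pow_pos hdr 2) (pow_pos hdt 2)]
  have hS2 : Δθ^4 ≤ S := by rw [hSdef]; linarith only [pow_pos hdr 4, mul_pos (pow_pos hdr 2) (pow_pos hdt 2)]
  have hS3 : Δr^2*Δθ^2 ≤ S := by rw [hSdef]; linarith only [pow_pos hdr 4, pow_pos hdt 4]
  have hSpos : 0 ≤ S := le_trans (pow_pos hdr 4).le hS1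
  have F1 : Δr^6 ≤ S*Δr^2 := by linarith only [mul_le_mul_of_nonneg_right hS1 (pow_pos hdr 2).le]
  have F2 : Δr^6 ≤ S*Δr := by
    linarith only [mul_le_mul_of_nonneg_right hS1 hdr.le,
      mul_nonneg (mul_nonneg (pow_pos hdr 4).le hdr.le) (by linarith only [hdr1] : (0:ℝ) ≤ 1 - Δr)]
  have F3 : Δθ^6 ≤ S*Δθ^2 := by linarith only [mul_le_mul_of_nonneg_right hS2 (pow_pos hdt 2).le]
  have F4 : Δr^4*Δθ^2 ≤ S*Δr^2 := by linarith only [mul_le_mul_of_nonneg_right hS3 (pow_pos hdr 2).le]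
  have F5 : Δr^4*Δθ^2 ≤ S*Δr := by
    have hq : Δr^2 ≤ Δr := by linarith only [mul_nonneg hdr.le (by linarith only [hdr1] : (0:ℝ) ≤ 1-Δr)]
    linarith only [F4, mul_le_mul_of_nonneg_left hq hSpos]
  have F6 : Δr^2*Δθ^4 ≤ S*Δθ^2 := by linarith only [mul_le_mul_of_nonneg_right hS3 (pow_pos hdt 2).le]
  have F7 : Δr^5 ≤ S := by
    linarith only [hS1, mul_nonneg (mul_nonneg (pow_pos hdr 2).le (pow_pos hdr 2).le) (by linarith only [hdr1] : (0:ℝ) ≤ 1-Δr)]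
  have N1 : |a1 + a2| ≤ 2*Mf*Δr^6 := by rw [abs_le]; constructor <;> linarith only [hl_a1, hu_a1, hl_a2, hu_a2, hl_a3, hu_a3, hl_a4, hu_a4]
  have N2 : |a1 - a2| ≤ 2*Mf*Δr^6 := by rw [abs_le]; constructor <;> linarith only [hl_a1, hu_a1, hl_a2, hu_a2, hl_a3, hu_a3, hl_a4, hu_a4]
  have N3 : |b1 + b2| ≤ 2*Mg*Δθ^6 := by rw [abs_le]; constructor <;> linarith only [hl_b1, hu_b1, hl_b2, hu_b2, hl_b3, hu_b3, hl_b4, hu_b4]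
  have N5 : |a4 - 4*a2 - 4*a1 + a3| ≤ 136*Mf*Δr^6 := by rw [abs_le]; constructor <;> linarith only [hl_a1, hu_a1, hl_a2, hu_a2, hl_a3, hu_a3, hl_a4, hu_a4]
  have N6 : |p4 - 4*p2 - 4*p1 + p3| ≤ 40*Mp*Δr^4 := by rw [abs_le]; constructor <;> linarith only [hl_p1, hu_p1, hl_p2, hu_p2, hl_p3, hu_p3, hl_p4, hu_p4]
  have N7 : |q4 - 4*q2 - 4*q1 + q3| ≤ 40*Mq*Δr^4 := by rw [abs_le]; constructor <;> linarith only [hl_q1, hu_q1, hl_q2, hu_q2, hl_q3, hu_q3, hl_q4, hu_q4]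
  have N8 : |-(a4/2) + a2 - a1 + a3/2| ≤ 66*Mf*Δr^6 := by rw [abs_le]; constructor <;> linarith only [hl_a1, hu_a1, hl_a2, hu_a2, hl_a3, hu_a3, hl_a4, hu_a4]
  have N10 : |-(p4/2) + p2 - p1 + p3/2| ≤ 18*Mp*Δr^4 := by rw [abs_le]; constructor <;> linarith only [hl_p1, hu_p1, hl_p2, hu_p2, hl_p3, hu_p3, hl_p4, hu_p4]
  have N12 : |-(q4/2) + q2 - q1 + q3/2| ≤ 18*Mq*Δr^4 := by rw [abs_le]; constructor <;> linarith only [hl_q1, hu_q1, hl_q2, hu_q2, hl_q3, hu_q3, hl_q4, hu_q4]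
  have N13 : |b4 - 4*b2 - 4*b1 + b3| ≤ 136*Mg*Δθ^6 := by rw [abs_le]; constructor <;> linarith only [hl_b1, hu_b1, hl_b2, hu_b2, hl_b3, hu_b3, hl_b4, hu_b4]
  have N14 : |s4 - 4*s2 - 4*s1 + s3| ≤ 40*Ms*Δθ^4 := by rw [abs_le]; constructor <;> linarith only [hl_s1, hu_s1, hl_s2, hu_s2, hl_s3, hu_s3, hl_s4, hu_s4]
  have N15 : |m4 - 4*m2 - 4*m1 + m3| ≤ 40*Mm*Δθ^4 := by rw [abs_le]; constructor <;> linarith only [hl_m1, hu_m1, hl_m2, hu_m2, hl_m3, hu_m3, hl_m4, hu_m4]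
  have hB1 : |(a1 + a2) / Δr ^ 2| ≤ 2*Mf*S := by
    apply abs_div_le' (by positivity)
    refine N1.trans ?_
    linarith only [mul_le_mul_of_nonneg_left F1 hMf0]
  have hB2 : |(a1 - a2) / (2 * Δr * r)| ≤ Mf/r*S := by
    apply abs_div_le' (by positivity)
    rw [show Mf/r*S*(2 * Δr * r) = 2*Mf*S*Δr by field_simp]
    refine N2.trans ?_
    linarith only [mul_le_mul_of_nonneg_left F2 hMf0]
  have hB3 : |(b1 + b2) / (r ^ 2 * Δθ ^ 2)| ≤ 2*Mg/r^2*S := by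
    apply abs_div_le' (by positivity)
    rw [show 2*Mg/r^2*S*(r ^ 2 * Δθ ^ 2) = 2*Mg*S*Δθ^2 by field_simp]
    refine N3.trans ?_
    linarith only [mul_le_mul_of_nonneg_left F3 hMg0]
  have hB4 : |-(c5 * Δr ^ 4 / (30 * r))| ≤ |c5|/(30*r)*S := by
    rw [abs_neg]
    apply abs_div_le' (by positivity)
    rw [show |c5|/(30*r)*S*(30 * r) = |c5| * S by field_simp]
    rw [abs_mul, abs_of_pos (pow_pos hdr 4)]
    exact mul_le_mul_of_nonneg_left hS1 (abs_nonneg c5)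
  have hB5 : |-((a4 - 4*a2 - 4*a1 + a3) / (12 * Δr ^ 2))| ≤ (34/3)*Mf*S := by
    rw [abs_neg]
    apply abs_div_le' (by positivity)
    rw [show (34/3)*Mf*S*(12 * Δr ^ 2) = 136*Mf*S*Δr^2 by ring]
    refine N5.trans ?_
    linarith only [mul_le_mul_of_nonneg_left F1 hMf0]
  have hB6 : |-((p4 - 4*p2 - 4*p1 + p3) / 12)| ≤ (10/3)*Mp*S := by
    rw [abs_neg]
    apply abs_div_le' (by norm_num : (0:ℝ) < 12)
    rw [show (10/3)*Mp*S*12 = 40*Mp*S by ring]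
    refine N6.trans ?_
    linarith only [mul_le_mul_of_nonneg_left hS1 hMp0]
  have hB7 : |-(Δθ ^ 2 * (q4 - 4*q2 - 4*q1 + q3) / (12 * Δr ^ 2))| ≤ (10/3)*Mq*S := by
    rw [abs_neg]
    apply abs_div_le' (by positivity)
    rw [abs_mul, abs_of_pos (pow_pos hdt 2)]
    linarith only [mul_le_mul_of_nonneg_left N7 (pow_pos hdt 2).le,
      mul_le_mul_of_nonneg_left F4 hMq0, abs_nonneg (q4 - 4*q2 - 4*q1 + q3), pow_pos hdt 2]
  have hB8 : |-((-(a4/2) + a2 - a1 + a3/2) / (6 * r * Δr))| ≤ 11*Mf/r*S := by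
    rw [abs_neg]
    apply abs_div_le' (by positivity)
    rw [show 11*Mf/r*S*(6 * r * Δr) = 66*Mf*S*Δr by field_simp; ring]
    refine N8.trans ?_
    linarith only [mul_le_mul_of_nonneg_left F2 hMf0]
  have hB9 : |-(va3 * Δr ^ 4 / (6 * r))| ≤ |va3|/(6*r)*S := by
    rw [abs_neg]
    apply abs_div_le' (by positivity)
    rw [show |va3|/(6*r)*S*(6 * r) = |va3| * S by field_simp]
    rw [abs_mul, abs_of_pos (pow_pos hdr 4)]
    exact mul_le_mul_of_nonneg_left hS1 (abs_nonneg va3)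
  have hB10 : |-(Δr * (-(p4/2) + p2 - p1 + p3/2) / (6 * r))| ≤ 3*Mp/r*S := by
    rw [abs_neg]
    apply abs_div_le' (by positivity)
    rw [show 3*Mp/r*S*(6 * r) = 18*Mp*S by field_simp; ring]
    rw [abs_mul, abs_of_pos hdr]
    linarith only [mul_le_mul_of_nonneg_left N10 hdr.le,
      mul_le_mul_of_nonneg_left F7 hMp0, abs_nonneg (-(p4/2) + p2 - p1 + p3/2), hdr]
  have hB11 : |-(wa3 * Δr ^ 2 * Δθ ^ 2 / (6 * r))| ≤ |wa3|/(6*r)*S := by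
    rw [abs_neg]
    apply abs_div_le' (by positivity)
    rw [show |wa3|/(6*r)*S*(6 * r) = |wa3| * S by field_simp]
    rw [abs_mul, abs_mul, abs_of_pos (pow_pos hdr 2), abs_of_pos (pow_pos hdt 2)]
    linarith only [mul_le_mul_of_nonneg_left hS3 (abs_nonneg wa3)]
  have hB12 : |-(Δθ ^ 2 * (-(q4/2) + q2 - q1 + q3/2) / (6 * r * Δr))| ≤ 3*Mq/r*S := by
    rw [abs_neg]
    apply abs_div_le' (by positivity)
    rw [show 3*Mq/r*S*(6 * r * Δr) = 18*Mq*S*Δr by field_simp; ring]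
    rw [abs_mul, abs_of_pos (pow_pos hdt 2)]
    linarith only [mul_le_mul_of_nonneg_left N12 (pow_pos hdt 2).le,
      mul_le_mul_of_nonneg_left F5 hMq0, abs_nonneg (-(q4/2) + q2 - q1 + q3/2), pow_pos hdt 2]
  have hB13 : |-((b4 - 4*b2 - 4*b1 + b3) / (12 * r ^ 2 * Δθ ^ 2))| ≤ (34/3)*Mg/r^2*S := by
    rw [abs_neg]
    apply abs_div_le' (by positivity)
    rw [show (34/3)*Mg/r^2*S*(12 * r ^ 2 * Δθ ^ 2) = 136*Mg*S*Δθ^2 by field_simp; ring]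
    refine N13.trans ?_
    linarith only [mul_le_mul_of_nonneg_left F3 hMg0]
  have hB14 : |-(Δr ^ 2 * (s4 - 4*s2 - 4*s1 + s3) / (12 * r ^ 2 * Δθ ^ 2))| ≤ (10/3)*Ms/r^2*S := by
    rw [abs_neg]
    apply abs_div_le' (by positivity)
    rw [show (10/3)*Ms/r^2*S*(12 * r ^ 2 * Δθ ^ 2) = 40*Ms*S*Δθ^2 by field_simp; ring]
    rw [abs_mul, abs_of_pos (pow_pos hdr 2)]
    linarith only [mul_le_mul_of_nonneg_left N14 (pow_pos hdr 2).le,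
      mul_le_mul_of_nonneg_left F6 hMs0, abs_nonneg (s4 - 4*s2 - 4*s1 + s3), pow_pos hdr 2]
  have hB15 : |-((m4 - 4*m2 - 4*m1 + m3) / (12 * r ^ 2))| ≤ (10/3)*Mm/r^2*S := by
    rw [abs_neg]
    apply abs_div_le' (by positivity)
    rw [show (10/3)*Mm/r^2*S*(12 * r ^ 2) = 40*Mm*S by field_simp; ring]
    refine N15.trans ?_
    linarith only [mul_le_mul_of_nonneg_left hS2 hMm0]
  have hfinal : |(a1 + a2) / Δr ^ 2
      + ((a1 - a2) / (2 * Δr * r)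
      + ((b1 + b2) / (r ^ 2 * Δθ ^ 2)
      + (-(c5 * Δr ^ 4 / (30 * r))
      + (-((a4 - 4*a2 - 4*a1 + a3) / (12 * Δr ^ 2))
      + (-((p4 - 4*p2 - 4*p1 + p3) / 12)
      + (-(Δθ ^ 2 * (q4 - 4*q2 - 4*q1 + q3) / (12 * Δr ^ 2))
      + (-((-(a4/2) + a2 - a1 + a3/2) / (6 * r * Δr))
      + (-(va3 * Δr ^ 4 / (6 * r))
      + (-(Δr * (-(p4/2) + p2 - p1 + p3/2) / (6 * r))
      + (-(wa3 * Δr ^ 2 * Δθ ^ 2 / (6 * r))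
      + (-(Δθ ^ 2 * (-(q4/2) + q2 - q1 + q3/2) / (6 * r * Δr))
      + (-((b4 - 4*b2 - 4*b1 + b3) / (12 * r ^ 2 * Δθ ^ 2))
      + (-(Δr ^ 2 * (s4 - 4*s2 - 4*s1 + s3) / (12 * r ^ 2 * Δθ ^ 2))
      + (-((m4 - 4*m2 - 4*m1 + m3) / (12 * r ^ 2))))))))))))))))|
      ≤ (2*Mf + Mf/r + 2*Mg/r^2 + |c5|/(30*r)
        + (34/3)*Mf + (10/3)*Mp + (10/3)*Mq + 11*Mf/r
        + |va3|/(6*r) + 3*Mp/r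
        + |wa3|/(6*r) + 3*Mq/r
        + (34/3)*Mg/r^2 + (10/3)*Ms/r^2 + (10/3)*Mm/r^2) * S := by
    have hsum : 2*Mf*S + (Mf/r*S + (2*Mg/r^2*S + (|c5|/(30*r)*S + ((34/3)*Mf*S + ((10/3)*Mp*S + ((10/3)*Mq*S + (11*Mf/r*S + (|va3|/(6*r)*S + (3*Mp/r*S + (|wa3|/(6*r)*S + (3*Mq/r*S + ((34/3)*Mg/r^2*S + ((10/3)*Ms/r^2*S + ((10/3)*Mm/r^2*S))))))))))))))
        = (2*Mf + Mf/r + 2*Mg/r^2 + |c5|/(30*r)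
        + (34/3)*Mf + (10/3)*Mp + (10/3)*Mq + 11*Mf/r
        + |va3|/(6*r) + 3*Mp/r
        + |wa3|/(6*r) + 3*Mq/r
        + (34/3)*Mg/r^2 + (10/3)*Ms/r^2 + (10/3)*Mm/r^2) * S := by ring
    refine le_trans ?_ (le_of_eq hsum)
    refine (abs_add_le _ _).trans (add_le_add hB1 ?_)
    refine (abs_add_le _ _).trans (add_le_add hB2 ?_)
    refine (abs_add_le _ _).trans (add_le_add hB3 ?_)
    refine (abs_add_le _ _).trans (add_le_add hB4 ?_)
    refine (abs_add_le _ _).trans (add_le_add hB5 ?_)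
    refine (abs_add_le _ _).trans (add_le_add hB6 ?_)
    refine (abs_add_le _ _).trans (add_le_add hB7 ?_)
    refine (abs_add_le _ _).trans (add_le_add hB8 ?_)
    refine (abs_add_le _ _).trans (add_le_add hB9 ?_)
    refine (abs_add_le _ _).trans (add_le_add hB10 ?_)
    refine (abs_add_le _ _).trans (add_le_add hB11 ?_)
    refine (abs_add_le _ _).trans (add_le_add hB12 ?_)
    refine (abs_add_le _ _).trans (add_le_add hB13 ?_)
    refine (abs_add_le _ _).trans (add_le_add hB14 ?_)
    exact hB15
  refine le_trans (le_of_eq (congrArg abs ?_)) hfinal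
  simp only [h_a1, h_a2, h_a3, h_a4, h_b1, h_b2, h_b3, h_b4, h_p1, h_p2, h_p3, h_p4,
    h_q1, h_q2, h_q3, h_q4, h_s1, h_s2, h_s3, h_s4, h_m1, h_m2, h_m3, h_m4]
  field_simp
  ring
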